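/- Let n ≥ 3. The three-variable polynomial z² − Δ(0, ..., 0, p, q) = z² − ((-1)^{n(n-1)/2} n^n q^{n-1} + (-1)^{(n-1)(n-2)/2} (n-1)^{n-1} p^n) is absolutely irreducible, i.e., irreducible over any algebraic closure of ℚ. -/

import Mathlib

open MvPolynomial

private lemma primeX0Fin1 (K : Type*) [Field K] :
    Prime (X (0 : Fin 1) : MvPolynomial (Fin 1) K) := by
  rw [← MulEquiv.prime_iff (finSuccEquiv K 0).toMulEquiv]
  show Prime (finSuccEquiv K 0 (X 0))
  rw [finSuccEquiv_X_zero]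
  exact Polynomial.prime_X

private lemma primeX1Fin2 (K : Type*) [Field K] :
    Prime (X (1 : Fin 2) : MvPolynomial (Fin 2) K) := by
  rw [← MulEquiv.prime_iff (finSuccEquiv K 1).toMulEquiv]
  show Prime (finSuccEquiv K 1 (X 1))
  have h1 : (1 : Fin 2) = Fin.succ 0 := rfl
  rw [h1, finSuccEquiv_X_succ, Polynomial.prime_C_iff]
  exact primeX0Fin1 K

private lemma not_square (K : Type*) [Field K] [CharZero K] {n : ℕ} (hn : 3 ≤ n)
    {a b : K} (ha : a ≠ 0) (hb : b ≠ 0) (g : MvPolynomial (Fin 2) K) :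
    g ^ 2 ≠ C a * X 1 ^ (n - 1) + C b * X 0 ^ n := by
  intro hg
  set f : MvPolynomial (Fin 2) K := C a * X 1 ^ (n - 1) + C b * X 0 ^ n with hf
  have hn1 : n - 1 ≠ 0 := by omega
  have hn2 : n - 1 - 1 ≠ 0 := by omega
  -- substitution X 1 ↦ 0
  set v : Fin 2 → MvPolynomial (Fin 2) K := fun i => if i = 1 then 0 else X i with hv
  have hvf : aeval v f = C b * X 0 ^ n := by
    simp [hf, hv, zero_pow hn1, algebraMap_eq]
  have hXf : ¬ (X 1 : MvPolynomial (Fin 2) K) ∣ f := by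
    rintro ⟨w, hw⟩
    apply_fun aeval v at hw
    rw [hvf] at hw
    simp [hv] at hw
    exact hb hw
  have hf0 : f ≠ 0 := fun h => hXf (h ▸ dvd_zero _)
  have hg0 : g ≠ 0 := by
    intro h; rw [h] at hg; exact hf0 (by rw [← hg]; ring)
  by_cases hu : IsUnit g
  · have hfu : IsUnit f := by rw [← hg]; exact hu.pow 2
    have := hfu.map (constantCoeff (σ := Fin 2) (R := K))
    simp [hf, zero_pow hn1, zero_pow (show n ≠ 0 by omega)] at this
  · obtain ⟨π, hπirr, hπdvd⟩ := WfDvdMonoid.exists_irreducible_factor hu hg0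
    have hπ : Prime π := UniqueFactorizationMonoid.irreducible_iff_prime.mp hπirr
    have hπf : π ∣ f := by rw [← hg, sq]; exact hπdvd.mul_right g
    have hπd : π ∣ pderiv 1 f := by
      have : pderiv 1 f = 2 * g ^ (2 - 1) * pderiv 1 g := by rw [← hg, pderiv_pow]; norm_num
      rw [this]
      have h1 : π ∣ g ^ (2 - 1) := by simpa using hπdvd
      exact (h1.mul_left 2).mul_right _
    have hdf : pderiv 1 f = C (a * ((n - 1 : ℕ) : K)) * X 1 ^ (n - 1 - 1) := by
      simp [hf, pderiv_pow, pderiv_X_self, pderiv_X_of_ne (show (0 : Fin 2) ≠ 1 by decide),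
        pderiv_C_mul]
      ring
    rw [hdf] at hπd
    have hc : (a * ((n - 1 : ℕ) : K)) ≠ 0 :=
      mul_ne_zero ha (Nat.cast_ne_zero.mpr (by omega))
    have hCu : IsUnit (C (a * ((n - 1 : ℕ) : K)) : MvPolynomial (Fin 2) K) :=
      IsUnit.of_mul_eq_one (C (a * ((n - 1 : ℕ) : K))⁻¹)
        (by rw [← C_mul, mul_inv_cancel₀ hc, C_1])
    have hπX : π ∣ X 1 := by
      rcases hπ.dvd_mul.mp hπd with h | h
      · exact absurd (isUnit_of_dvd_unit h hCu) hπ.not_unit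
      · exact hπ.dvd_of_dvd_pow h
    obtain ⟨u, hu'⟩ := hπX
    have hX1 : Prime (X (1 : Fin 2) : MvPolynomial (Fin 2) K) := primeX1Fin2 K
    rcases hX1.irreducible.isUnit_or_isUnit hu' with h | h
    · exact hπ.not_unit h
    · have : Associated π (X 1 : MvPolynomial (Fin 2) K) := ⟨h.unit, by rw [h.unit_spec, hu']⟩
      exact hXf (this.symm.dvd.trans hπf)

set_option maxHeartbeats 1000000 in
set_option synthInstance.maxHeartbeats 1000000 in
theorem z_sq_sub_trinomial_disc_abs_irreducible (K : Type*) [Field K] [IsAlgClosed K]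
    [CharZero K] (n : ℕ) (hn : 3 ≤ n) :
    Irreducible
      ((X 0 : MvPolynomial (Fin 3) K) ^ 2 -
        (C ((-1 : K) ^ (n * (n - 1) / 2) * (n : K) ^ n) * (X 2) ^ (n - 1) +
          C ((-1 : K) ^ ((n - 1) * (n - 2) / 2) * ((n - 1 : ℕ) : K) ^ (n - 1)) * (X 1) ^ n)) := by
  set a : K := (-1 : K) ^ (n * (n - 1) / 2) * (n : K) ^ n with hadef
  set b : K := (-1 : K) ^ ((n - 1) * (n - 2) / 2) * ((n - 1 : ℕ) : K) ^ (n - 1) with hbdef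
  have ha : a ≠ 0 := mul_ne_zero (pow_ne_zero _ (neg_ne_zero.mpr one_ne_zero))
    (pow_ne_zero _ (Nat.cast_ne_zero.mpr (by omega)))
  have hb : b ≠ 0 := mul_ne_zero (pow_ne_zero _ (neg_ne_zero.mpr one_ne_zero))
    (pow_ne_zero _ (Nat.cast_ne_zero.mpr (by omega)))
  clear_value a b
  set f : MvPolynomial (Fin 2) K := C a * X 1 ^ (n - 1) + C b * X 0 ^ n with hfdef
  clear_value f
  have key : Irreducible (Polynomial.X ^ 2 - Polynomial.C f : Polynomial (MvPolynomial (Fin 2) K)) := by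
    have hmonic : (Polynomial.X ^ 2 - Polynomial.C f).Monic :=
      Polynomial.monic_X_pow_sub_C f two_ne_zero
    rw [hmonic.irreducible_iff_irreducible_map_fraction_map (K := FractionRing (MvPolynomial (Fin 2) K))]
    rw [Polynomial.map_sub, Polynomial.map_pow, Polynomial.map_X, Polynomial.map_C]
    refine X_pow_sub_C_irreducible_of_prime Nat.prime_two ?_
    intro y hy
    have hint : IsIntegral (MvPolynomial (Fin 2) K) y := by
      refine ⟨Polynomial.X ^ 2 - Polynomial.C f, Polynomial.monic_X_pow_sub_C f two_ne_zero, ?_⟩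
      rw [Polynomial.eval₂_sub, Polynomial.eval₂_pow, Polynomial.eval₂_X, Polynomial.eval₂_C,
        hy, sub_self]
    obtain ⟨g, hgy⟩ := IsIntegrallyClosed.isIntegral_iff.mp hint
    refine not_square K hn ha hb g ?_
    apply IsFractionRing.injective (MvPolynomial (Fin 2) K) (FractionRing (MvPolynomial (Fin 2) K))
    rw [map_pow, hgy, hy, hfdef]
  have e1 : (X 1 : MvPolynomial (Fin 3) K) = X (Fin.succ 0) := rfl
  have e2 : (X 2 : MvPolynomial (Fin 3) K) = X (Fin.succ 1) := rfl
  have hC : ∀ c : K, finSuccEquiv K 2 (C c) = Polynomial.C (C c) := fun c => by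
    simp [finSuccEquiv_apply]
  have hmap : finSuccEquiv K 2
      ((X 0 : MvPolynomial (Fin 3) K) ^ 2 -
        (C a * (X 2) ^ (n - 1) + C b * (X 1) ^ n)) =
      Polynomial.X ^ 2 - Polynomial.C f := by
    simp only [hfdef, e1, e2, map_sub, map_add, map_mul, map_pow, hC, finSuccEquiv_X_zero,
      finSuccEquiv_X_succ]
  exact (MulEquiv.irreducible_iff (finSuccEquiv K 2)).mp (hmap ▸ key)
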